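/- arXiv:1701.04582 — 2 statements merged into one kernel-verified Lean document; each statement's English description precedes it below -/
import Mathlib

section
/- Let A be a bivariate copula and let μ be a probability measure on [0,1]² whose distribution function is A. Suppose that [M,A] > 1/4 where [C,A] := ∫_{[0,1]²} C dμ, and that the map κ_A[C] := ([C,A] − [Π,A])/([M,A] − [Π,A]) satisfies the measure-of-concordance axioms: κ_A[M] = 1, κ_A[π(C)] = κ_A[C] for every copula C, and κ_A[ν₁(C)] = −κ_A[C] for every copula C, where (π(C))(u,v) := C(v,u) and (ν₁(C))(u,v) := v − C(1−u,v). Then A is Γ-invariant, i.e. A(u,v) = A(v,u) and A(u,v) = v − A(1−u,v) for all u,v ∈ [0,1]. -/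
open MeasureTheory Set Filter Topology

/-- A bivariate copula on [0,1]², encoded as a function `ℝ → ℝ → ℝ` whose
defining properties are required on the unit square. -/
def IsCopula (C : ℝ → ℝ → ℝ) : Prop :=
  (∀ u ∈ Icc (0:ℝ) 1, C u 0 = 0) ∧
  (∀ v ∈ Icc (0:ℝ) 1, C 0 v = 0) ∧
  (∀ u ∈ Icc (0:ℝ) 1, C u 1 = u) ∧
  (∀ v ∈ Icc (0:ℝ) 1, C 1 v = v) ∧
  (∀ u₁ u₂ v₁ v₂ : ℝ, u₁ ∈ Icc (0:ℝ) 1 → u₂ ∈ Icc (0:ℝ) 1 → v₁ ∈ Icc (0:ℝ) 1 →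
    v₂ ∈ Icc (0:ℝ) 1 → u₁ ≤ u₂ → v₁ ≤ v₂ →
    0 ≤ C u₂ v₂ - C u₂ v₁ - C u₁ v₂ + C u₁ v₁) ∧
  (∀ u ∈ Icc (0:ℝ) 1, ∀ v ∈ Icc (0:ℝ) 1, C u v ∈ Icc (0:ℝ) 1)

/-- Γ-invariance of a bivariate copula: invariance under the transposition and
the partial reflection ν₁. -/
def IsGammaInvariant (C : ℝ → ℝ → ℝ) : Prop :=
  ∀ u ∈ Icc (0:ℝ) 1, ∀ v ∈ Icc (0:ℝ) 1,
    C u v = C v u ∧ C u v = v - C (1 - u) v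

/-- The unit square in ℝ². -/
def unitSquare : Set (ℝ × ℝ) := Icc (0:ℝ) 1 ×ˢ Icc (0:ℝ) 1

/-- `μ` is a measure on [0,1]² whose distribution function is `A`. -/
def IsDistributionOf (μ : Measure (ℝ × ℝ)) (A : ℝ → ℝ → ℝ) : Prop :=
  ∀ u ∈ Icc (0:ℝ) 1, ∀ v ∈ Icc (0:ℝ) 1,
    μ (Icc (0:ℝ) u ×ˢ Icc (0:ℝ) v) = ENNReal.ofReal (A u v)

/-- The biconvex form `[C, A]` where `μ` is the measure associated with `A`. -/
noncomputable def biForm (μ : Measure (ℝ × ℝ)) (C : ℝ → ℝ → ℝ) : ℝ :=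
  ∫ p in unitSquare, C p.1 p.2 ∂μ


/-- Piecewise-linear "tent": 0 at 0, climbs with slope n to 1, stays 1 until a,
then descends with slope n, hitting 0 at a + 1/n. -/
noncomputable def tent (a : ℝ) (n : ℕ) (u : ℝ) : ℝ :=
  max 0 (min ((n:ℝ)*u) (min 1 ((n:ℝ)*(a-u)+1)))

lemma tent_nonneg (a : ℝ) (n : ℕ) (u : ℝ) : 0 ≤ tent a n u := le_max_left _ _

lemma tent_le_one (a : ℝ) (n : ℕ) (u : ℝ) : tent a n u ≤ 1 :=
  max_le zero_le_one ((min_le_right _ _).trans (min_le_left _ _))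

lemma tent_abs_le_one (a : ℝ) (n : ℕ) (u : ℝ) : |tent a n u| ≤ 1 :=
  abs_le.2 ⟨by linarith [tent_nonneg a n u], tent_le_one a n u⟩

lemma tent_zero (a : ℝ) (ha : 0 ≤ a) (n : ℕ) : tent a n 0 = 0 := by
  have h1 : (0:ℝ) ≤ (n:ℝ)*(a-0)+1 := by have := (Nat.cast_nonneg n : (0:ℝ) ≤ n); nlinarith
  simp only [tent, mul_zero]
  rw [min_eq_left (le_min zero_le_one h1), max_self]

lemma tent_one (a : ℝ) (n : ℕ) (h : (n:ℝ)*(a-1)+1 ≤ 0) : tent a n 1 = 0 := by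
  have : min ((n:ℝ)*1) (min 1 ((n:ℝ)*(a-1)+1)) ≤ 0 :=
    le_trans (min_le_right _ _) (le_trans (min_le_right _ _) h)
  simp only [tent]
  exact max_eq_left this

lemma tent_continuous (a : ℝ) (n : ℕ) : Continuous (tent a n) := by
  unfold tent; fun_prop

private lemma min_sub_min_le (p q p' q' : ℝ) :
    min p q - min p' q' ≤ max |p - p'| |q - q'| := by
  rcases le_total p' q' with h | h
  · rw [min_eq_left h]
    calc min p q - p' ≤ p - p' := by linarith [min_le_left p q]
    _ ≤ |p - p'| := le_abs_self _
    _ ≤ _ := le_max_left _ _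
  · rw [min_eq_right h]
    calc min p q - q' ≤ q - q' := by linarith [min_le_right p q]
    _ ≤ |q - q'| := le_abs_self _
    _ ≤ _ := le_max_right _ _

lemma abs_min_sub_min (p q p' q' : ℝ) :
    |min p q - min p' q'| ≤ max |p - p'| |q - q'| := by
  rw [abs_sub_le_iff]
  refine ⟨min_sub_min_le _ _ _ _, ?_⟩
  have := min_sub_min_le p' q' p q
  rwa [abs_sub_comm p' p, abs_sub_comm q' q] at this

lemma tent_lip (a : ℝ) (n : ℕ) (u u' : ℝ) :
    |tent a n u - tent a n u'| ≤ (n:ℝ) * |u - u'| := by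
  have hn : (0:ℝ) ≤ (n:ℝ) * |u - u'| := by positivity
  have h0 : |tent a n u - tent a n u'| ≤
      |min ((n:ℝ)*u) (min 1 ((n:ℝ)*(a-u)+1)) - min ((n:ℝ)*u') (min 1 ((n:ℝ)*(a-u')+1))| := by
    simpa only [tent, max_comm (0:ℝ)] using
      abs_max_sub_max_le_abs (min ((n:ℝ)*u) (min 1 ((n:ℝ)*(a-u)+1)))
        (min ((n:ℝ)*u') (min 1 ((n:ℝ)*(a-u')+1))) 0
  refine h0.trans ?_
  refine (abs_min_sub_min _ _ _ _).trans (max_le ?_ ?_)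
  · rw [← mul_sub, abs_mul, Nat.abs_cast]
  · refine (abs_min_sub_min _ _ _ _).trans (max_le (by simpa using hn) ?_)
    have : (n:ℝ)*(a-u)+1 - ((n:ℝ)*(a-u')+1) = (n:ℝ)*(u' - u) := by ring
    rw [this, abs_mul, Nat.abs_cast, abs_sub_comm u' u]

lemma tent_tendsto (a : ℝ) (u : ℝ) :
    Tendsto (fun n : ℕ => tent a n u) atTop (𝓝 (if u ∈ Ioc 0 a then (1:ℝ) else 0)) := by
  by_cases hu : u ≤ 0
  · have h0 : ∀ n : ℕ, tent a n u = 0 := by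
      intro n
      have h1 : min ((n:ℝ)*u) (min 1 ((n:ℝ)*(a-u)+1)) ≤ 0 :=
        (min_le_left _ _).trans (mul_nonpos_of_nonneg_of_nonpos (n.cast_nonneg) hu)
      simp only [tent]; exact max_eq_left h1
    have : u ∉ Ioc (0:ℝ) a := fun h => absurd h.1 (not_lt.2 hu)
    simp only [this, if_neg, if_false]
    simpa [h0] using tendsto_const_nhds (α := ℝ) (f := atTop (α := ℕ))
  · push_neg at hu
    by_cases hua : u ≤ a
    · have hmem : u ∈ Ioc (0:ℝ) a := ⟨hu, hua⟩
      rw [if_pos hmem]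
      obtain ⟨N, hN⟩ := exists_nat_ge (1/u)
      have hev : ∀ᶠ n : ℕ in atTop, tent a n u = 1 := by
        filter_upwards [eventually_ge_atTop N] with n hn
        have hnu : (1:ℝ) ≤ (n:ℝ) * u := by
          have h2 : (1/u) ≤ (n:ℝ) := hN.trans (by exact_mod_cast hn)
          calc (1:ℝ) = (1/u) * u := by rw [one_div, inv_mul_cancel₀ (ne_of_gt hu)]
          _ ≤ (n:ℝ) * u := by apply mul_le_mul_of_nonneg_right h2 hu.le
        have h3 : (1:ℝ) ≤ (n:ℝ)*(a-u)+1 := by nlinarith [(Nat.cast_nonneg n : (0:ℝ) ≤ n)]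
        simp only [tent]
        rw [min_eq_left h3, min_eq_right hnu, max_eq_right zero_le_one]
      exact Tendsto.congr' (hev.mono fun n h => h.symm) tendsto_const_nhds
    · push_neg at hua
      have hmem : u ∉ Ioc (0:ℝ) a := fun h => absurd h.2 (not_le.2 hua)
      rw [if_neg hmem]
      obtain ⟨N, hN⟩ := exists_nat_ge (1/(u-a))
      have hev : ∀ᶠ n : ℕ in atTop, tent a n u = 0 := by
        filter_upwards [eventually_ge_atTop N] with n hn
        have h2 : (1/(u-a)) ≤ (n:ℝ) := hN.trans (by exact_mod_cast hn)
        have h3 : (1:ℝ) ≤ (n:ℝ) * (u-a) := by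
          calc (1:ℝ) = (1/(u-a)) * (u-a) := by rw [one_div, inv_mul_cancel₀ (by linarith : u-a ≠ 0)]
          _ ≤ (n:ℝ) * (u-a) := mul_le_mul_of_nonneg_right h2 (by linarith)
        have h4 : (n:ℝ)*(a-u)+1 ≤ 0 := by nlinarith
        have h5 : min ((n:ℝ)*u) (min 1 ((n:ℝ)*(a-u)+1)) ≤ 0 :=
          (min_le_right _ _).trans ((min_le_right _ _).trans h4)
        simp only [tent]; exact max_eq_left h5
      exact Tendsto.congr' (hev.mono fun n h => h.symm) tendsto_const_nhds

lemma isCopula_mk (C : ℝ → ℝ → ℝ)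
    (hb1 : ∀ u ∈ Icc (0:ℝ) 1, C u 0 = 0) (hb2 : ∀ v ∈ Icc (0:ℝ) 1, C 0 v = 0)
    (hb3 : ∀ u ∈ Icc (0:ℝ) 1, C u 1 = u) (hb4 : ∀ v ∈ Icc (0:ℝ) 1, C 1 v = v)
    (h2i : ∀ u₁ u₂ v₁ v₂ : ℝ, u₁ ∈ Icc (0:ℝ) 1 → u₂ ∈ Icc (0:ℝ) 1 → v₁ ∈ Icc (0:ℝ) 1 →
      v₂ ∈ Icc (0:ℝ) 1 → u₁ ≤ u₂ → v₁ ≤ v₂ →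
      0 ≤ C u₂ v₂ - C u₂ v₁ - C u₁ v₂ + C u₁ v₁) : IsCopula C := by
  have h01 : (0:ℝ) ∈ Icc (0:ℝ) 1 := ⟨le_refl 0, zero_le_one⟩
  have h11 : (1:ℝ) ∈ Icc (0:ℝ) 1 := ⟨zero_le_one, le_refl 1⟩
  refine ⟨hb1, hb2, hb3, hb4, h2i, fun u hu v hv => ⟨?_, ?_⟩⟩
  · have := h2i 0 u 0 v h01 hu h01 hv hu.1 hv.1
    have e1 := hb1 u hu; have e2 := hb2 v hv; have e3 := hb1 0 h01
    linarith
  · have := h2i 0 u v 1 h01 hu hv h11 hu.1 hv.2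
    have e1 := hb3 u hu; have e2 := hb2 v hv; have e3 := hb2 1 h11
    linarith [hu.2]

lemma isCopula_FGM (φ ψ : ℝ → ℝ) (t : ℝ) (hφ0 : φ 0 = 0) (hφ1 : φ 1 = 0)
    (hψ0 : ψ 0 = 0) (hψ1 : ψ 1 = 0)
    (hbc : ∀ u₁ u₂ v₁ v₂ : ℝ, u₁ ≤ u₂ → v₁ ≤ v₂ →
      |t * ((φ u₂ - φ u₁) * (ψ v₂ - ψ v₁))| ≤ (u₂ - u₁) * (v₂ - v₁)) :
    IsCopula (fun u v => u * v + t * (φ u * ψ v)) := by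
  refine isCopula_mk _ ?_ ?_ ?_ ?_ ?_
  · intro u _; simp [hψ0]
  · intro v _; simp [hφ0]
  · intro u _; simp [hψ1]
  · intro v _; simp [hφ1]
  · intro u₁ u₂ v₁ v₂ _ _ _ _ hu hv
    have h := hbc u₁ u₂ v₁ v₂ hu hv
    have h2 := neg_abs_le (t * ((φ u₂ - φ u₁) * (ψ v₂ - ψ v₁)))
    nlinarith

/-- monotonicity of a copula in the first variable. -/
lemma copula_mono₁ (A : ℝ → ℝ → ℝ) (hA : IsCopula A) {u₁ u₂ v : ℝ}
    (h1 : u₁ ∈ Icc (0:ℝ) 1) (h2 : u₂ ∈ Icc (0:ℝ) 1) (hv : v ∈ Icc (0:ℝ) 1)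
    (h : u₁ ≤ u₂) : A u₁ v ≤ A u₂ v := by
  obtain ⟨hb1, hb2, hb3, hb4, h2i, hr⟩ := hA
  have h01 : (0:ℝ) ∈ Icc (0:ℝ) 1 := ⟨le_refl 0, zero_le_one⟩
  have := h2i u₁ u₂ 0 v h1 h2 h01 hv h hv.1
  have e1 := hb1 u₁ h1; have e2 := hb1 u₂ h2
  linarith

lemma measurableSet_unitSquare : MeasurableSet unitSquare :=
  (measurableSet_Icc).prod measurableSet_Icc

lemma integrableOn_unitSquare (μ : Measure (ℝ × ℝ)) [IsProbabilityMeasure μ]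
    (f : ℝ × ℝ → ℝ) (hf : Continuous f) : IntegrableOn f unitSquare μ :=
  hf.continuousOn.integrableOn_compact (isCompact_Icc.prod isCompact_Icc)

lemma biForm_FGM (μ : Measure (ℝ × ℝ)) [IsProbabilityMeasure μ]
    (φ ψ : ℝ → ℝ) (hφ : Continuous φ) (hψ : Continuous ψ) (t : ℝ) :
    biForm μ (fun u v => u * v + t * (φ u * ψ v)) =
      biForm μ (fun u v => u * v) + t * ∫ p in unitSquare, φ p.1 * ψ p.2 ∂μ := by
  unfold biForm
  have h1 : IntegrableOn (fun p : ℝ × ℝ => p.1 * p.2) unitSquare μ :=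
    integrableOn_unitSquare μ _ (continuous_fst.mul continuous_snd)
  have h2 : IntegrableOn (fun p : ℝ × ℝ => t * (φ p.1 * ψ p.2)) unitSquare μ :=
    integrableOn_unitSquare μ _
      (continuous_const.mul ((hφ.comp continuous_fst).mul (hψ.comp continuous_snd)))
  rw [integral_add h1 h2, integral_const_mul]

lemma tendsto_setIntegral_indicator (μ : Measure (ℝ × ℝ)) [IsProbabilityMeasure μ]
    (F : ℕ → ℝ × ℝ → ℝ) (hFc : ∀ n, Continuous (F n)) (hFb : ∀ n p, |F n p| ≤ 1)
    (S : Set (ℝ × ℝ)) (hS : MeasurableSet S)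
    (hlim : ∀ p, Tendsto (fun n => F n p) atTop (𝓝 (S.indicator (fun _ => (1:ℝ)) p))) :
    Tendsto (fun n => ∫ p in unitSquare, F n p ∂μ) atTop
      (𝓝 ((μ.restrict unitSquare S).toReal)) := by
  have h := tendsto_integral_of_dominated_convergence (μ := μ.restrict unitSquare)
    (F := F) (f := S.indicator fun _ => (1:ℝ)) (bound := fun _ => (1:ℝ))
    (fun n => (hFc n).aestronglyMeasurable) (integrable_const 1)
    (fun n => ae_of_all _ fun p => by simpa [Real.norm_eq_abs] using hFb n p)
    (ae_of_all _ hlim)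
  rw [show (fun _ : ℝ × ℝ => (1:ℝ)) = (1 : ℝ × ℝ → ℝ) from rfl, integral_indicator_one hS] at h
  exact h

section MeasureLemmas

variable (μ : Measure (ℝ × ℝ)) [IsProbabilityMeasure μ] (A : ℝ → ℝ → ℝ)

/-- vertical lines carry no mass. -/
lemma vline_null (hr : IsDistributionOf μ A) (hA1 : ∀ c ∈ Icc (0:ℝ) 1, A c 1 = c)
    (hA01 : A 0 1 = 0) (c : ℝ) (hc : c ∈ Icc (0:ℝ) 1) :
    μ (Icc c c ×ˢ Icc (0:ℝ) 1) = 0 := by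
  have h11 : (1:ℝ) ∈ Icc (0:ℝ) 1 := ⟨zero_le_one, le_refl 1⟩
  rcases eq_or_lt_of_le hc.1 with h0 | h0
  · have : μ (Icc c c ×ˢ Icc (0:ℝ) 1) ≤ μ (Icc (0:ℝ) 0 ×ˢ Icc (0:ℝ) 1) := by
      apply measure_mono; rw [← h0]
    have h2 : μ (Icc (0:ℝ) 0 ×ˢ Icc (0:ℝ) 1) = 0 := by
      rw [hr 0 ⟨le_refl 0, zero_le_one⟩ 1 h11, hA01, ENNReal.ofReal_zero]
    exact le_antisymm (this.trans h2.le) zero_le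
  · refine le_antisymm ?_ zero_le
    refine ENNReal.le_of_forall_pos_le_add fun ε hε _ => ?_
    rw [zero_add]
    set δ : ℝ := min c ε with hδdef
    have hδpos : 0 < δ := lt_min h0 (by exact_mod_cast hε)
    have hδc : δ ≤ c := min_le_left _ _
    have hsub : Icc c c ×ˢ Icc (0:ℝ) 1 ⊆
        (Icc 0 c ×ˢ Icc (0:ℝ) 1) \ (Icc 0 (c - δ) ×ˢ Icc (0:ℝ) 1) := by
      rintro ⟨x, y⟩ ⟨hx, hy⟩
      simp only [mem_Icc] at hx
      have hxc : x = c := le_antisymm hx.2 hx.1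
      refine ⟨⟨by simp [mem_Icc, hxc, hc.1], hy⟩, ?_⟩
      rintro ⟨hx', -⟩
      simp only [mem_Icc, hxc] at hx'
      linarith [hx'.2]
    have hcδ : c - δ ∈ Icc (0:ℝ) 1 := ⟨by linarith, by linarith [hc.2]⟩
    have hdiff : μ ((Icc 0 c ×ˢ Icc (0:ℝ) 1) \ (Icc 0 (c - δ) ×ˢ Icc (0:ℝ) 1)) =
        μ (Icc 0 c ×ˢ Icc (0:ℝ) 1) - μ (Icc 0 (c - δ) ×ˢ Icc (0:ℝ) 1) := by
      refine measure_diff (prod_mono (Icc_subset_Icc le_rfl (by linarith)) subset_rfl)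
        ((measurableSet_Icc.prod measurableSet_Icc).nullMeasurableSet) (measure_ne_top μ _)
    calc μ (Icc c c ×ˢ Icc (0:ℝ) 1) ≤ _ := measure_mono hsub
    _ = μ (Icc 0 c ×ˢ Icc (0:ℝ) 1) - μ (Icc 0 (c - δ) ×ˢ Icc (0:ℝ) 1) := hdiff
    _ = ENNReal.ofReal c - ENNReal.ofReal (c - δ) := by
        rw [hr c hc 1 h11, hr (c - δ) hcδ 1 h11, hA1 c hc, hA1 (c-δ) hcδ]
    _ = ENNReal.ofReal (c - (c - δ)) := (ENNReal.ofReal_sub _ (by linarith)).symm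
    _ = ENNReal.ofReal δ := by ring_nf
    _ ≤ (ε : ENNReal) := by
        rw [← ENNReal.ofReal_coe_nnreal]
        exact ENNReal.ofReal_le_ofReal (min_le_right _ _)

lemma hline0_null (hr : IsDistributionOf μ A) (hA10 : A 1 0 = 0) :
    μ (Icc (0:ℝ) 1 ×ˢ Icc (0:ℝ) 0) = 0 := by
  rw [hr 1 ⟨zero_le_one, le_refl 1⟩ 0 ⟨le_refl 0, zero_le_one⟩, hA10, ENNReal.ofReal_zero]

lemma vline0_null (hr : IsDistributionOf μ A) (hA01 : A 0 1 = 0) :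
    μ (Icc (0:ℝ) 0 ×ˢ Icc (0:ℝ) 1) = 0 := by
  rw [hr 0 ⟨le_refl 0, zero_le_one⟩ 1 ⟨zero_le_one, le_refl 1⟩, hA01, ENNReal.ofReal_zero]

/-- measure of the open-closed rectangle. -/
lemma measure_Ioc_rect (hr : IsDistributionOf μ A) (hA10 : A 1 0 = 0) (hA01 : A 0 1 = 0)
    {a b : ℝ} (ha : 0 < a) (ha1 : a ≤ 1) (hb : 0 < b) (hb1 : b ≤ 1) :
    μ (Ioc (0:ℝ) a ×ˢ Ioc (0:ℝ) b) = ENNReal.ofReal (A a b) := by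
  have key : μ (Icc (0:ℝ) a ×ˢ Icc (0:ℝ) b) = ENNReal.ofReal (A a b) :=
    hr a ⟨ha.le, ha1⟩ b ⟨hb.le, hb1⟩
  refine le_antisymm ?_ ?_
  · rw [← key]
    exact measure_mono (prod_mono Ioc_subset_Icc_self Ioc_subset_Icc_self)
  · rw [← key]
    have hsub : Icc (0:ℝ) a ×ˢ Icc (0:ℝ) b ⊆
        (Ioc (0:ℝ) a ×ˢ Ioc (0:ℝ) b) ∪ ((Icc (0:ℝ) 0 ×ˢ Icc (0:ℝ) 1) ∪
          (Icc (0:ℝ) 1 ×ˢ Icc (0:ℝ) 0)) := by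
      rintro ⟨x, y⟩ ⟨hx, hy⟩
      simp only [mem_Icc] at hx hy
      rcases eq_or_lt_of_le hx.1 with h0 | h0
      · exact Or.inr (Or.inl ⟨by simp [mem_Icc, ← h0], by simp [mem_Icc]; constructor <;> linarith⟩)
      rcases eq_or_lt_of_le hy.1 with h1 | h1
      · exact Or.inr (Or.inr ⟨by simp [mem_Icc]; constructor <;> linarith, by simp [mem_Icc, ← h1]⟩)
      · exact Or.inl ⟨⟨h0, hx.2⟩, ⟨h1, hy.2⟩⟩
    calc μ (Icc (0:ℝ) a ×ˢ Icc (0:ℝ) b) ≤ _ := measure_mono hsub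
    _ ≤ μ (Ioc (0:ℝ) a ×ˢ Ioc (0:ℝ) b) + μ ((Icc (0:ℝ) 0 ×ˢ Icc (0:ℝ) 1) ∪
          (Icc (0:ℝ) 1 ×ˢ Icc (0:ℝ) 0)) := measure_union_le _ _
    _ ≤ μ (Ioc (0:ℝ) a ×ˢ Ioc (0:ℝ) b) + (μ (Icc (0:ℝ) 0 ×ˢ Icc (0:ℝ) 1) +
          μ (Icc (0:ℝ) 1 ×ˢ Icc (0:ℝ) 0)) := by
        gcongr; exact measure_union_le _ _
    _ = μ (Ioc (0:ℝ) a ×ˢ Ioc (0:ℝ) b) := by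
        rw [vline0_null μ A hr hA01, hline0_null μ A hr hA10, add_zero, add_zero]

/-- measure of the reflected strip. -/
lemma measure_Ico_rect (hr : IsDistributionOf μ A) (hA10 : A 1 0 = 0) (hA01 : A 0 1 = 0)
    (hA1 : ∀ c ∈ Icc (0:ℝ) 1, A c 1 = c) (hAb : ∀ c ∈ Icc (0:ℝ) 1, A 1 c = c)
    {c b : ℝ} (hc0 : 0 ≤ c) (hc1 : c < 1) (hb : 0 < b) (hb1 : b ≤ 1)
    (hAcb : 0 ≤ A c b) :
    μ (Ico c 1 ×ˢ Ioc (0:ℝ) b) = ENNReal.ofReal (b - A c b) := by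
  have hcI : c ∈ Icc (0:ℝ) 1 := ⟨hc0, hc1.le⟩
  have hbI : b ∈ Icc (0:ℝ) 1 := ⟨hb.le, hb1⟩
  have h1I : (1:ℝ) ∈ Icc (0:ℝ) 1 := ⟨zero_le_one, le_refl 1⟩
  set D : Set (ℝ × ℝ) := (Icc (0:ℝ) 1 ×ˢ Icc (0:ℝ) b) \ (Icc (0:ℝ) c ×ˢ Icc (0:ℝ) b) with hD
  have hDval : μ D = ENNReal.ofReal (b - A c b) := by
    rw [hD, measure_diff (prod_mono (Icc_subset_Icc le_rfl hc1.le) subset_rfl)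
      ((measurableSet_Icc.prod measurableSet_Icc).nullMeasurableSet) (measure_ne_top μ _),
      hr 1 h1I b hbI, hr c hcI b hbI, hAb b hbI, ← ENNReal.ofReal_sub _ hAcb]
  have hv1 := vline_null μ A hr hA1 hA01 1 h1I
  have hvc := vline_null μ A hr hA1 hA01 c hcI
  have hh0 := hline0_null μ A hr hA10
  refine le_antisymm ?_ ?_
  · -- S₂ ⊆ D ∪ vline c
    have hsub : Ico c 1 ×ˢ Ioc (0:ℝ) b ⊆ D ∪ (Icc c c ×ˢ Icc (0:ℝ) 1) := by
      rintro ⟨x, y⟩ ⟨hx, hy⟩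
      simp only [mem_Ico] at hx; simp only [mem_Ioc] at hy
      rcases eq_or_lt_of_le hx.1 with h0 | h0
      · exact Or.inr ⟨by simp [mem_Icc, ← h0], by simp [mem_Icc]; constructor <;> linarith⟩
      · refine Or.inl ⟨⟨?_, ?_⟩, ?_⟩
        · simp only [mem_Icc]; constructor <;> linarith
        · simp only [mem_Icc]; constructor <;> linarith
        · rintro ⟨hx', -⟩
          simp only [mem_Icc] at hx'
          linarith [hx'.2]
    calc μ (Ico c 1 ×ˢ Ioc (0:ℝ) b) ≤ μ (D ∪ (Icc c c ×ˢ Icc (0:ℝ) 1)) := measure_mono hsub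
    _ ≤ μ D + μ (Icc c c ×ˢ Icc (0:ℝ) 1) := measure_union_le _ _
    _ = ENNReal.ofReal (b - A c b) := by rw [hvc, add_zero, hDval]
  · have hsub : D ⊆ (Ico c 1 ×ˢ Ioc (0:ℝ) b) ∪ ((Icc (1:ℝ) 1 ×ˢ Icc (0:ℝ) 1) ∪
        (Icc (0:ℝ) 1 ×ˢ Icc (0:ℝ) 0)) := by
      rintro ⟨x, y⟩ ⟨⟨hx, hy⟩, hmem⟩
      simp only [mem_Icc] at hx hy
      have hxc : c < x := by
        by_contra hcon
        exact hmem ⟨by simp [mem_Icc]; constructor <;> linarith, by simp [mem_Icc]; exact hy⟩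
      rcases eq_or_lt_of_le hx.2 with h1 | h1
      · exact Or.inr (Or.inl ⟨by simp [mem_Icc, h1], by simp [mem_Icc]; constructor <;> linarith⟩)
      rcases eq_or_lt_of_le hy.1 with h0 | h0
      · exact Or.inr (Or.inr ⟨by simp [mem_Icc]; exact hx, by simp [mem_Icc, ← h0]⟩)
      · exact Or.inl ⟨⟨hxc.le, h1⟩, ⟨h0, hy.2⟩⟩
    rw [← hDval]
    calc μ D ≤ _ := measure_mono hsub
    _ ≤ μ (Ico c 1 ×ˢ Ioc (0:ℝ) b) + μ ((Icc (1:ℝ) 1 ×ˢ Icc (0:ℝ) 1) ∪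
        (Icc (0:ℝ) 1 ×ˢ Icc (0:ℝ) 0)) := measure_union_le _ _
    _ ≤ μ (Ico c 1 ×ˢ Ioc (0:ℝ) b) + (μ (Icc (1:ℝ) 1 ×ˢ Icc (0:ℝ) 1) +
        μ (Icc (0:ℝ) 1 ×ˢ Icc (0:ℝ) 0)) := by gcongr; exact measure_union_le _ _
    _ = μ (Ico c 1 ×ˢ Ioc (0:ℝ) b) := by rw [hv1, hh0, add_zero, add_zero]

end MeasureLemmas

theorem stmt3 (A : ℝ → ℝ → ℝ) (μ : MeasureTheory.Measure (ℝ × ℝ))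
    (hA : IsCopula A)
    (hμ : MeasureTheory.IsProbabilityMeasure μ) (hdist : IsDistributionOf μ A)
    (hM : biForm μ (fun u v => min u v) > 1/4)
    (κ : (ℝ → ℝ → ℝ) → ℝ)
    (hκ : ∀ C, κ C = (biForm μ C - biForm μ (fun u v => u * v)) /
        (biForm μ (fun u v => min u v) - biForm μ (fun u v => u * v)))
    (h1 : κ (fun u v => min u v) = 1)
    (h2 : ∀ C, IsCopula C → κ (fun u v => C v u) = κ C)
    (h3 : ∀ C, IsCopula C → κ (fun u v => v - C (1 - u) v) = -(κ C)) :
    IsGammaInvariant A := by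
  obtain ⟨hA1, hA2, hA3, hA4, hA5, hA6⟩ := hA
  have hA' : IsCopula A := ⟨hA1, hA2, hA3, hA4, hA5, hA6⟩
  have h0I : (0:ℝ) ∈ Icc (0:ℝ) 1 := ⟨le_refl 0, zero_le_one⟩
  have h1I : (1:ℝ) ∈ Icc (0:ℝ) 1 := ⟨zero_le_one, le_refl 1⟩
  -- the normalizing denominator is nonzero
  have hD : biForm μ (fun u v => min u v) - biForm μ (fun u v => u * v) ≠ 0 := by
    intro h
    rw [hκ, h, div_zero] at h1
    exact zero_ne_one h1
  -- the two functional equations satisfied by the biconvex form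
  have key2 : ∀ C, IsCopula C → biForm μ (fun u v => C v u) = biForm μ C := by
    intro C hC
    have h := h2 C hC
    rw [hκ, hκ] at h
    field_simp [hD] at h
    linarith
  have key3 : ∀ C, IsCopula C →
      biForm μ (fun u v => v - C (1 - u) v) + biForm μ C =
        2 * biForm μ (fun u v => u * v) := by
    intro C hC
    have h := h3 C hC
    rw [hκ, hκ, ← neg_div] at h
    field_simp [hD] at h
    linarith
  -- interior identity
  have main : ∀ a b : ℝ, 0 < a → a < 1 → 0 < b → b < 1 →
      A a b = A b a ∧ A a b = b - A (1 - a) b := by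
    intro a b ha0 ha1 hb0 hb1
    have hAab0 : 0 ≤ A a b := (hA6 a ⟨ha0.le, ha1.le⟩ b ⟨hb0.le, hb1.le⟩).1
    have hAba0 : 0 ≤ A b a := (hA6 b ⟨hb0.le, hb1.le⟩ a ⟨ha0.le, ha1.le⟩).1
    have h1aI : (1 - a) ∈ Icc (0:ℝ) 1 := ⟨by linarith, by linarith⟩
    have hA1ab0 : 0 ≤ A (1 - a) b := (hA6 (1-a) h1aI b ⟨hb0.le, hb1.le⟩).1
    have hAmono : A (1 - a) b ≤ b := by
      have := copula_mono₁ A hA' h1aI h1I ⟨hb0.le, hb1.le⟩ (by linarith)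
      rwa [hA4 b ⟨hb0.le, hb1.le⟩] at this
    -- the three integral sequences
    set Jab : ℕ → ℝ := fun n => ∫ p in unitSquare, tent a n p.1 * tent b n p.2 ∂μ with hJab
    set Jba : ℕ → ℝ := fun n => ∫ p in unitSquare, tent b n p.1 * tent a n p.2 ∂μ with hJba
    set Jrefl : ℕ → ℝ := fun n => ∫ p in unitSquare, tent a n (1 - p.1) * tent b n p.2 ∂μ
      with hJrefl
    -- the eventual equations coming from the concordance axioms
    have heq : ∀ n : ℕ, 1 ≤ n → ((n:ℝ)*(a-1)+1 ≤ 0) → ((n:ℝ)*(b-1)+1 ≤ 0) →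
        Jba n = Jab n ∧ Jrefl n = Jab n := by
      intro n hn ha' hb'
      set t : ℝ := (n:ℝ)⁻¹ * (n:ℝ)⁻¹ with ht
      have hnn : (0:ℝ) < (n:ℝ) := by exact_mod_cast hn
      have htpos : 0 < t := by positivity
      have htne : t ≠ 0 := ne_of_gt htpos
      have hC : IsCopula (fun u v => u * v + t * (tent a n u * tent b n v)) := by
        apply isCopula_FGM _ _ _ (tent_zero a ha0.le n) (tent_one a n ha')
          (tent_zero b hb0.le n) (tent_one b n hb')
        intro u₁ u₂ v₁ v₂ hu hv
        have lφ := tent_lip a n u₂ u₁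
        have lψ := tent_lip b n v₂ v₁
        rw [abs_of_nonneg (by linarith : (0:ℝ) ≤ u₂ - u₁)] at lφ
        rw [abs_of_nonneg (by linarith : (0:ℝ) ≤ v₂ - v₁)] at lψ
        have e1 : |t * ((tent a n u₂ - tent a n u₁) * (tent b n v₂ - tent b n v₁))|
            = t * (|tent a n u₂ - tent a n u₁| * |tent b n v₂ - tent b n v₁|) := by
          rw [abs_mul, abs_of_nonneg htpos.le, abs_mul]
        rw [e1]
        have hstep : |tent a n u₂ - tent a n u₁| * |tent b n v₂ - tent b n v₁| ≤
            ((n:ℝ) * (u₂ - u₁)) * ((n:ℝ) * (v₂ - v₁)) :=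
          mul_le_mul lφ lψ (abs_nonneg _) (mul_nonneg hnn.le (by linarith))
        calc t * (|tent a n u₂ - tent a n u₁| * |tent b n v₂ - tent b n v₁|)
            ≤ t * (((n:ℝ) * (u₂ - u₁)) * ((n:ℝ) * (v₂ - v₁))) := by
              exact mul_le_mul_of_nonneg_left hstep htpos.le
        _ = (t * (n:ℝ) * (n:ℝ)) * ((u₂ - u₁) * (v₂ - v₁)) := by ring
        _ = (u₂ - u₁) * (v₂ - v₁) := by
              rw [ht]; field_simp
      constructor
      · have h := key2 _ hC
        have e1 : (fun u v : ℝ => v * u + t * (tent a n v * tent b n u))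
            = (fun u v : ℝ => u * v + t * (tent b n u * tent a n v)) := by
          funext u v; ring
        rw [e1] at h
        rw [biForm_FGM μ _ _ (tent_continuous b n) (tent_continuous a n) t,
            biForm_FGM μ _ _ (tent_continuous a n) (tent_continuous b n) t] at h
        have h' : t * Jba n = t * Jab n := by
          rw [hJba, hJab]; dsimp only; linarith
        exact mul_left_cancel₀ htne h'
      · have h := key3 _ hC
        have e2 : (fun u v : ℝ => v - ((1 - u) * v + t * (tent a n (1 - u) * tent b n v)))
            = (fun u v : ℝ => u * v + (-t) * ((fun x => tent a n (1 - x)) u * tent b n v)) := by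
          funext u v; simp only; ring
        rw [e2] at h
        rw [biForm_FGM μ (fun x => tent a n (1 - x)) (tent b n)
              (show Continuous fun x : ℝ => tent a n (1-x) from
                (tent_continuous a n).comp (continuous_const.sub continuous_id))
              (tent_continuous b n) (-t),
            biForm_FGM μ _ _ (tent_continuous a n) (tent_continuous b n) t] at h
        rw [neg_mul] at h
        have h' : t * Jrefl n = t * Jab n := by
          rw [hJrefl, hJab]; dsimp only; linarith
        exact mul_left_cancel₀ htne h'
    -- eventual validity of the hypotheses of heq
    obtain ⟨N₁, hN₁⟩ := exists_nat_ge (1/(1-a))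
    obtain ⟨N₂, hN₂⟩ := exists_nat_ge (1/(1-b))
    have hev : ∀ᶠ n : ℕ in Filter.atTop, Jba n = Jab n ∧ Jrefl n = Jab n := by
      filter_upwards [Filter.eventually_ge_atTop (max 1 (max N₁ N₂))] with n hn
      have hn1 : 1 ≤ n := le_trans (le_max_left _ _) hn
      have hnN₁ : (N₁:ℝ) ≤ (n:ℝ) := by
        exact_mod_cast le_trans (le_trans (le_max_left _ _) (le_max_right 1 _)) hn
      have hnN₂ : (N₂:ℝ) ≤ (n:ℝ) := by
        exact_mod_cast le_trans (le_trans (le_max_right _ _) (le_max_right 1 _)) hn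
      have ha' : (n:ℝ)*(a-1)+1 ≤ 0 := by
        have h3 : (1:ℝ) ≤ (n:ℝ) * (1-a) := by
          calc (1:ℝ) = (1/(1-a)) * (1-a) := by
                rw [one_div, inv_mul_cancel₀ (by linarith : (1:ℝ)-a ≠ 0)]
          _ ≤ (n:ℝ) * (1-a) :=
                mul_le_mul_of_nonneg_right (hN₁.trans hnN₁) (by linarith)
        nlinarith
      have hb' : (n:ℝ)*(b-1)+1 ≤ 0 := by
        have h3 : (1:ℝ) ≤ (n:ℝ) * (1-b) := by
          calc (1:ℝ) = (1/(1-b)) * (1-b) := by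
                rw [one_div, inv_mul_cancel₀ (by linarith : (1:ℝ)-b ≠ 0)]
          _ ≤ (n:ℝ) * (1-b) :=
                mul_le_mul_of_nonneg_right (hN₂.trans hnN₂) (by linarith)
        nlinarith
      exact heq n hn1 ha' hb'
    -- bounds for the integrands
    have habs : ∀ (c d : ℝ) (n : ℕ) (p : ℝ × ℝ), |tent c n p.1 * tent d n p.2| ≤ 1 := by
      intro c d n p
      rw [abs_mul]
      exact mul_le_one₀ (tent_abs_le_one c n p.1) (abs_nonneg _) (tent_abs_le_one d n p.2)
    -- membership rewriting for the reflected tent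
    have hmemiff : ∀ x : ℝ, ((1 - x) ∈ Ioc (0:ℝ) a) ↔ (x ∈ Ico (1-a) 1) := by
      intro x
      simp only [mem_Ioc, mem_Ico]
      constructor <;> rintro ⟨h, h'⟩ <;> constructor <;> linarith
    -- indicator product computations
    have hind : ∀ (c d : ℝ) (p : ℝ × ℝ),
        (if p.1 ∈ Ioc (0:ℝ) c then (1:ℝ) else 0) * (if p.2 ∈ Ioc (0:ℝ) d then (1:ℝ) else 0)
          = (Ioc (0:ℝ) c ×ˢ Ioc (0:ℝ) d).indicator (fun _ => (1:ℝ)) p := by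
      intro c d p
      by_cases hp1 : p.1 ∈ Ioc (0:ℝ) c <;> by_cases hp2 : p.2 ∈ Ioc (0:ℝ) d <;>
        simp [Set.indicator_apply, Set.mem_prod, hp1, hp2]
    have hind2 : ∀ p : ℝ × ℝ,
        (if p.1 ∈ Ico (1-a) 1 then (1:ℝ) else 0) * (if p.2 ∈ Ioc (0:ℝ) b then (1:ℝ) else 0)
          = (Ico (1-a) 1 ×ˢ Ioc (0:ℝ) b).indicator (fun _ => (1:ℝ)) p := by
      intro p
      by_cases hp1 : p.1 ∈ Ico (1-a) 1 <;> by_cases hp2 : p.2 ∈ Ioc (0:ℝ) b <;>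
        simp [Set.indicator_apply, Set.mem_prod, hp1, hp2]
    -- the three limits
    have T1 : Filter.Tendsto Jab Filter.atTop (nhds (A a b)) := by
      have hsub : Ioc (0:ℝ) a ×ˢ Ioc (0:ℝ) b ⊆ unitSquare := by
        rintro ⟨x, y⟩ ⟨hx, hy⟩
        simp only [mem_Ioc] at hx hy
        exact ⟨⟨hx.1.le, hx.2.trans ha1.le⟩, ⟨hy.1.le, hy.2.trans hb1.le⟩⟩
      have hmeas : MeasurableSet (Ioc (0:ℝ) a ×ˢ Ioc (0:ℝ) b) :=
        measurableSet_Ioc.prod measurableSet_Ioc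
      have hT := tendsto_setIntegral_indicator μ (fun n p => tent a n p.1 * tent b n p.2)
        (fun n => ((tent_continuous a n).comp continuous_fst).mul
          ((tent_continuous b n).comp continuous_snd))
        (fun n p => habs a b n p) _ hmeas
        (fun p => by
          have := (tent_tendsto a p.1).mul (tent_tendsto b p.2)
          rwa [hind a b p] at this)
      have hval : ((μ.restrict unitSquare) (Ioc (0:ℝ) a ×ˢ Ioc (0:ℝ) b)).toReal = A a b := by
        rw [Measure.restrict_apply hmeas, inter_eq_self_of_subset_left hsub,
          measure_Ioc_rect μ A hdist (hA1 1 h1I) (hA2 1 h1I) ha0 ha1.le hb0 hb1.le,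
          ENNReal.toReal_ofReal hAab0]
      rwa [hval] at hT
    have T2 : Filter.Tendsto Jba Filter.atTop (nhds (A b a)) := by
      have hsub : Ioc (0:ℝ) b ×ˢ Ioc (0:ℝ) a ⊆ unitSquare := by
        rintro ⟨x, y⟩ ⟨hx, hy⟩
        simp only [mem_Ioc] at hx hy
        exact ⟨⟨hx.1.le, hx.2.trans hb1.le⟩, ⟨hy.1.le, hy.2.trans ha1.le⟩⟩
      have hmeas : MeasurableSet (Ioc (0:ℝ) b ×ˢ Ioc (0:ℝ) a) :=
        measurableSet_Ioc.prod measurableSet_Ioc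
      have hT := tendsto_setIntegral_indicator μ (fun n p => tent b n p.1 * tent a n p.2)
        (fun n => ((tent_continuous b n).comp continuous_fst).mul
          ((tent_continuous a n).comp continuous_snd))
        (fun n p => habs b a n p) _ hmeas
        (fun p => by
          have := (tent_tendsto b p.1).mul (tent_tendsto a p.2)
          rwa [hind b a p] at this)
      have hval : ((μ.restrict unitSquare) (Ioc (0:ℝ) b ×ˢ Ioc (0:ℝ) a)).toReal = A b a := by
        rw [Measure.restrict_apply hmeas, inter_eq_self_of_subset_left hsub,
          measure_Ioc_rect μ A hdist (hA1 1 h1I) (hA2 1 h1I) hb0 hb1.le ha0 ha1.le,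
          ENNReal.toReal_ofReal hAba0]
      rwa [hval] at hT
    have T3 : Filter.Tendsto Jrefl Filter.atTop (nhds (b - A (1-a) b)) := by
      have hsub : Ico (1-a) 1 ×ˢ Ioc (0:ℝ) b ⊆ unitSquare := by
        rintro ⟨x, y⟩ ⟨hx, hy⟩
        simp only [mem_Ico] at hx; simp only [mem_Ioc] at hy
        exact ⟨⟨le_trans (by linarith) hx.1, hx.2.le⟩, ⟨hy.1.le, hy.2.trans hb1.le⟩⟩
      have hmeas : MeasurableSet (Ico (1-a) 1 ×ˢ Ioc (0:ℝ) b) :=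
        measurableSet_Ico.prod measurableSet_Ioc
      have hT := tendsto_setIntegral_indicator μ (fun n p => tent a n (1 - p.1) * tent b n p.2)
        (fun n => ((tent_continuous a n).comp (continuous_const.sub continuous_fst)).mul
          ((tent_continuous b n).comp continuous_snd))
        (fun n p => habs a b n (1 - p.1, p.2)) _ hmeas
        (fun p => by
          have h := (tent_tendsto a (1 - p.1)).mul (tent_tendsto b p.2)
          have e : (if (1 - p.1) ∈ Ioc (0:ℝ) a then (1:ℝ) else 0)
              = (if p.1 ∈ Ico (1-a) 1 then (1:ℝ) else 0) := by
            by_cases hp : (1 - p.1) ∈ Ioc (0:ℝ) a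
            · rw [if_pos hp, if_pos ((hmemiff p.1).1 hp)]
            · rw [if_neg hp, if_neg (fun hc => hp ((hmemiff p.1).2 hc))]
          rw [e] at h
          rwa [hind2 p] at h)
      have hval : ((μ.restrict unitSquare) (Ico (1-a) 1 ×ˢ Ioc (0:ℝ) b)).toReal
          = b - A (1-a) b := by
        rw [Measure.restrict_apply hmeas, inter_eq_self_of_subset_left hsub,
          measure_Ico_rect μ A hdist (hA1 1 h1I) (hA2 1 h1I) hA3 hA4
            (by linarith : (0:ℝ) ≤ 1-a) (by linarith : 1-a < 1) hb0 hb1.le hA1ab0,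
          ENNReal.toReal_ofReal (by linarith)]
      rwa [hval] at hT
    exact ⟨tendsto_nhds_unique T1 (Filter.Tendsto.congr' (hev.mono fun n h => h.1) T2),
      tendsto_nhds_unique T1 (Filter.Tendsto.congr' (hev.mono fun n h => h.2) T3)⟩
  -- boundary cases and conclusion
  intro u hu v hv
  have h1uI : (1 - u) ∈ Icc (0:ℝ) 1 := ⟨by linarith [hu.2], by linarith [hu.1]⟩
  constructor
  · rcases eq_or_lt_of_le hu.1 with h | h
    · rw [← h, hA2 v hv, hA1 v hv]
    rcases eq_or_lt_of_le hu.2 with h' | h'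
    · rw [h', hA4 v hv, hA3 v hv]
    rcases eq_or_lt_of_le hv.1 with g | g
    · rw [← g, hA1 u hu, hA2 u hu]
    rcases eq_or_lt_of_le hv.2 with g' | g'
    · rw [g', hA3 u hu, hA4 u hu]
    · exact (main u v h h' g g').1
  · rcases eq_or_lt_of_le hv.1 with g | g
    · rw [← g, hA1 u hu, hA1 (1-u) h1uI]; ring
    rcases eq_or_lt_of_le hv.2 with g' | g'
    · rw [g', hA3 u hu, hA3 (1-u) h1uI]; ring
    rcases eq_or_lt_of_le hu.1 with h | h
    · have e : (1:ℝ) - 0 = 1 := by norm_num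
      rw [← h, hA2 v hv, e, hA4 v hv]; ring
    rcases eq_or_lt_of_le hu.2 with h' | h'
    · have e : (1:ℝ) - 1 = 0 := by norm_num
      rw [h', hA4 v hv, e, hA2 v hv]; ring
    · exact (main u v h h' g g').2
end

section
/- Let q ∈ [0,1] and let C be a bivariate copula. Define ρ[C] := 12∫_{[0,1]²} C(u,v) d(u,v) − 3 (Spearman's rho, integral with respect to Lebesgue measure) and γ[C] := 8·((1/2)∫₀¹ C(t,t) dt + (1/2)∫₀¹ C(t,1−t) dt) − 2 (Gini's gamma). Let ν_q := (1−q)·λ² + q·((1/2)μ_M + (1/2)μ_W) be the probability measure associated with the copula E_q := (1−q)Π + qM_{Γ^ν}, where λ² is Lebesgue measure on [0,1]² and μ_M, μ_W are the pushforwards of the uniform measure on [0,1] under t ↦ (t,t) and t ↦ (t,1−t). Then the measure of concordance κ_{E_q}[C] := (∫_{[0,1]²} C dν_q − 1/4)/(∫_{[0,1]²} min(u,v) dν_q(u,v) − 1/4) satisfies κ_{E_q}[C] = (2(1−q)/(2+q))·ρ[C] + (3q/(2+q))·γ[C]. -/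
open MeasureTheory Set

-- clamp
noncomputable def clamp (x : ℝ) : ℝ := max 0 (min 1 x)

lemma clamp_mem (x : ℝ) : clamp x ∈ Icc (0:ℝ) 1 := by
  constructor
  · exact le_max_left _ _
  · simp [clamp, max_le_iff, min_le_iff]

lemma clamp_eq {x : ℝ} (hx : x ∈ Icc (0:ℝ) 1) : clamp x = x := by
  simp [clamp, min_eq_right hx.2, max_eq_right hx.1]

lemma clamp_lip (x y : ℝ) : |clamp x - clamp y| ≤ |x - y| := by
  have h1 := abs_max_sub_max_le_max (0:ℝ) (min 1 x) 0 (min 1 y)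
  have h2 := abs_min_sub_min_le_max (1:ℝ) x 1 y
  simp only [sub_self, abs_zero] at h1 h2
  exact h1.trans (sup_le (abs_nonneg _)
    (h2.trans (le_of_eq (sup_eq_right.mpr (abs_nonneg _)))))

-- copula Lipschitz estimates
lemma copula_lip1 {C : ℝ → ℝ → ℝ} (hC : IsCopula C) {u₁ u₂ v : ℝ}
    (h1 : u₁ ∈ Icc (0:ℝ) 1) (h2 : u₂ ∈ Icc (0:ℝ) 1) (hv : v ∈ Icc (0:ℝ) 1) :
    |C u₂ v - C u₁ v| ≤ |u₂ - u₁| := by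
  obtain ⟨hb0, _, hb1, _, h2i, _⟩ := hC
  have key : ∀ a b : ℝ, a ∈ Icc (0:ℝ) 1 → b ∈ Icc (0:ℝ) 1 → a ≤ b →
      0 ≤ C b v - C a v ∧ C b v - C a v ≤ b - a := by
    intro a b ha hb hab
    constructor
    · have := h2i a b 0 v ha hb (by simp) hv hab hv.1
      simpa [hb0 a ha, hb0 b hb] using this
    · have := h2i a b v 1 ha hb hv (by simp) hab hv.2
      have e1 := hb1 a ha; have e2 := hb1 b hb
      nlinarith
  rcases le_total u₁ u₂ with h | h
  · obtain ⟨hl, hr⟩ := key u₁ u₂ h1 h2 h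
    rw [abs_of_nonneg hl, abs_of_nonneg (by linarith)]; exact hr
  · obtain ⟨hl, hr⟩ := key u₂ u₁ h2 h1 h
    rw [abs_sub_comm, abs_sub_comm u₂ u₁, abs_of_nonneg hl, abs_of_nonneg (by linarith)]; exact hr

lemma copula_lip2 {C : ℝ → ℝ → ℝ} (hC : IsCopula C) {u v₁ v₂ : ℝ}
    (hu : u ∈ Icc (0:ℝ) 1) (h1 : v₁ ∈ Icc (0:ℝ) 1) (h2 : v₂ ∈ Icc (0:ℝ) 1) :
    |C u v₂ - C u v₁| ≤ |v₂ - v₁| := by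
  obtain ⟨_, hb0, _, hb1, h2i, _⟩ := hC
  have key : ∀ a b : ℝ, a ∈ Icc (0:ℝ) 1 → b ∈ Icc (0:ℝ) 1 → a ≤ b →
      0 ≤ C u b - C u a ∧ C u b - C u a ≤ b - a := by
    intro a b ha hb hab
    constructor
    · have := h2i 0 u a b (by simp) hu ha hb hu.1 hab
      simpa [hb0 a ha, hb0 b hb] using this
    · have := h2i u 1 a b hu (by simp) ha hb hu.2 hab
      have e1 := hb1 a ha; have e2 := hb1 b hb
      nlinarith
  rcases le_total v₁ v₂ with h | h
  · obtain ⟨hl, hr⟩ := key v₁ v₂ h1 h2 h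
    rw [abs_of_nonneg hl, abs_of_nonneg (by linarith)]; exact hr
  · obtain ⟨hl, hr⟩ := key v₂ v₁ h2 h1 h
    rw [abs_sub_comm, abs_sub_comm v₂ v₁, abs_of_nonneg hl, abs_of_nonneg (by linarith)]; exact hr

-- clamped copula
noncomputable def Cc (C : ℝ → ℝ → ℝ) (u v : ℝ) : ℝ := C (clamp u) (clamp v)

lemma Cc_eq {C : ℝ → ℝ → ℝ} {u v : ℝ} (hu : u ∈ Icc (0:ℝ) 1) (hv : v ∈ Icc (0:ℝ) 1) :
    Cc C u v = C u v := by rw [Cc, clamp_eq hu, clamp_eq hv]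

lemma Cc_cont {C : ℝ → ℝ → ℝ} (hC : IsCopula C) :
    Continuous fun p : ℝ × ℝ => Cc C p.1 p.2 := by
  apply (LipschitzWith.of_dist_le_mul (K := 2) ?_).continuous
  rintro ⟨x1, x2⟩ ⟨y1, y2⟩
  have h1 := copula_lip1 hC (clamp_mem y1) (clamp_mem x1) (clamp_mem x2)
  have h2 := copula_lip2 hC (clamp_mem y1) (clamp_mem y2) (clamp_mem x2)
  have hc1 := clamp_lip x1 y1
  have hc2 := clamp_lip x2 y2
  have hd : dist (Cc C x1 x2) (Cc C y1 y2) ≤ |x1 - y1| + |x2 - y2| := by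
    rw [Real.dist_eq]
    calc |Cc C x1 x2 - Cc C y1 y2|
        ≤ |C (clamp x1) (clamp x2) - C (clamp y1) (clamp x2)|
          + |C (clamp y1) (clamp x2) - C (clamp y1) (clamp y2)| := by
          rw [Cc, Cc]; exact abs_sub_le _ _ _
      _ ≤ |clamp x1 - clamp y1| + |clamp x2 - clamp y2| := by
          exact add_le_add h1 h2
      _ ≤ |x1 - y1| + |x2 - y2| := by gcongr
  refine hd.trans ?_
  rw [Prod.dist_eq]
  have : |x1 - y1| ≤ dist (x1, x2) (y1, y2) := by
    rw [Prod.dist_eq]; exact le_max_of_le_left (by rw [Real.dist_eq])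
  have : |x2 - y2| ≤ dist (x1, x2) (y1, y2) := by
    rw [Prod.dist_eq]; exact le_max_of_le_right (by rw [Real.dist_eq])
  simp only [Prod.dist_eq, Real.dist_eq]
  push_cast
  nlinarith [le_max_left |x1 - y1| |x2 - y2|, le_max_right |x1 - y1| |x2 - y2|,
    abs_nonneg (x1 - y1), abs_nonneg (x2 - y2)]

-- integral computations for min
lemma int_min_inner {x : ℝ} (hx : x ∈ Icc (0:ℝ) 1) :
    ∫ y in Icc (0:ℝ) 1, min x y = x - x^2/2 := by
  rw [integral_Icc_eq_integral_Ioc,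
    ← intervalIntegral.integral_of_le (by norm_num : (0:ℝ) ≤ 1)]
  have i1 : IntervalIntegrable (fun y => min x y) volume 0 x :=
    (continuous_const.min continuous_id).intervalIntegrable _ _
  have i2 : IntervalIntegrable (fun y => min x y) volume x 1 :=
    (continuous_const.min continuous_id).intervalIntegrable _ _
  rw [← intervalIntegral.integral_add_adjacent_intervals i1 i2]
  have e1 : ∫ y in (0:ℝ)..x, min x y = ∫ y in (0:ℝ)..x, y := by
    apply intervalIntegral.integral_congr
    intro y hy
    rw [uIcc_of_le hx.1] at hy
    exact min_eq_right hy.2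
  have e2 : ∫ y in x..(1:ℝ), min x y = ∫ y in x..(1:ℝ), x := by
    apply intervalIntegral.integral_congr
    intro y hy
    rw [uIcc_of_le hx.2] at hy
    exact min_eq_left hy.1
  rw [e1, e2, integral_id, intervalIntegral.integral_const, smul_eq_mul]
  ring

lemma intMinSq : ∫ p in unitSquare, min p.1 p.2 = 1/3 := by
  have hint : IntegrableOn (fun p : ℝ × ℝ => min p.1 p.2)
      (Icc (0:ℝ) 1 ×ˢ Icc (0:ℝ) 1) (volume.prod volume) := by
    rw [← Measure.volume_eq_prod]
    exact (continuous_fst.min continuous_snd).continuousOn.integrableOn_compact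
      (isCompact_Icc.prod isCompact_Icc)
  rw [unitSquare, Measure.volume_eq_prod, setIntegral_prod _ hint]
  have heq : EqOn (fun x : ℝ => ∫ y in Icc (0:ℝ) 1, min x y)
      (fun x : ℝ => x - x^2/2) (Icc (0:ℝ) 1) := fun x hx => int_min_inner hx
  rw [setIntegral_congr_fun measurableSet_Icc heq, integral_Icc_eq_integral_Ioc,
    ← intervalIntegral.integral_of_le (by norm_num : (0:ℝ) ≤ 1)]
  rw [intervalIntegral.integral_sub intervalIntegral.intervalIntegrable_id
      (((continuous_pow 2).div_const 2).intervalIntegrable _ _),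
    intervalIntegral.integral_div, integral_id, integral_pow]
  norm_num

lemma intMinDiag : ∫ t in Icc (0:ℝ) 1, min t t = 1/2 := by
  simp only [min_self]
  rw [integral_Icc_eq_integral_Ioc,
    ← intervalIntegral.integral_of_le (by norm_num : (0:ℝ) ≤ 1),
    integral_id]
  norm_num

lemma intMinAnti : ∫ t in Icc (0:ℝ) 1, min t (1 - t) = 1/4 := by
  rw [integral_Icc_eq_integral_Ioc,
    ← intervalIntegral.integral_of_le (by norm_num : (0:ℝ) ≤ 1)]
  have i1 : IntervalIntegrable (fun t => min t (1 - t)) volume 0 (1/2) :=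
    (continuous_id.min (continuous_const.sub continuous_id)).intervalIntegrable _ _
  have i2 : IntervalIntegrable (fun t => min t (1 - t)) volume (1/2) 1 :=
    (continuous_id.min (continuous_const.sub continuous_id)).intervalIntegrable _ _
  rw [← intervalIntegral.integral_add_adjacent_intervals i1 i2]
  have e1 : ∫ t in (0:ℝ)..(1/2), min t (1 - t) = ∫ t in (0:ℝ)..(1/2), t := by
    apply intervalIntegral.integral_congr
    intro t ht
    rw [uIcc_of_le (by norm_num : (0:ℝ) ≤ 1/2)] at ht
    exact min_eq_left (by cases ht with | intro h1 h2 => linarith)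
  have e2 : ∫ t in (1/2:ℝ)..1, min t (1 - t) = ∫ t in (1/2:ℝ)..1, (1 - t) := by
    apply intervalIntegral.integral_congr
    intro t ht
    rw [uIcc_of_le (by norm_num : (1/2:ℝ) ≤ 1)] at ht
    exact min_eq_right (by cases ht with | intro h1 h2 => linarith)
  rw [e1, e2, integral_id,
    intervalIntegral.integral_sub (intervalIntegrable_const)
      intervalIntegral.intervalIntegrable_id, integral_one, integral_id]
  norm_num

lemma key_decomp (q : ℝ) (hq : q ∈ Icc (0:ℝ) 1)
    (μM μW νq : Measure (ℝ × ℝ))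
    (hμM : μM = Measure.map (fun t : ℝ => (t, t)) (volume.restrict (Icc (0:ℝ) 1)))
    (hμW : μW = Measure.map (fun t : ℝ => (t, 1 - t)) (volume.restrict (Icc (0:ℝ) 1)))
    (hνq : νq = ENNReal.ofReal (1 - q) • volume.restrict unitSquare
      + ENNReal.ofReal q • ((1/2 : ENNReal) • μM + (1/2 : ENNReal) • μW))
    (f : ℝ → ℝ → ℝ) (hf : Continuous fun p : ℝ × ℝ => f p.1 p.2) :
    biForm νq f = (1 - q) * (∫ p in unitSquare, f p.1 p.2)
      + q * (1/2 * (∫ t in Icc (0:ℝ) 1, f t t) + 1/2 * (∫ t in Icc (0:ℝ) 1, f t (1 - t))) := by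
  have hS : MeasurableSet unitSquare := by
    rw [unitSquare]; exact measurableSet_Icc.prod measurableSet_Icc
  have hcomp : IsCompact unitSquare := by
    rw [unitSquare]; exact isCompact_Icc.prod isCompact_Icc
  have hgM : Measurable fun t : ℝ => (t, t) := measurable_id.prodMk measurable_id
  have hgW : Measurable fun t : ℝ => (t, 1 - t) :=
    measurable_id.prodMk (measurable_const.sub measurable_id)
  have hpreM : (fun t : ℝ => (t, t)) ⁻¹' unitSquare = Icc (0:ℝ) 1 := by
    ext t; simp [unitSquare, Prod.le_def]
  have hpreW : (fun t : ℝ => (t, 1 - t)) ⁻¹' unitSquare = Icc (0:ℝ) 1 := by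
    ext t
    simp only [unitSquare, mem_preimage, mem_prod, mem_Icc]
    constructor
    · rintro ⟨h, -⟩; exact h
    · rintro ⟨h1, h2⟩; exact ⟨⟨h1, h2⟩, by constructor <;> linarith⟩
  have hMr : μM.restrict unitSquare
      = Measure.map (fun t : ℝ => (t, t)) (volume.restrict (Icc (0:ℝ) 1)) := by
    rw [hμM, Measure.restrict_map hgM hS, hpreM,
      Measure.restrict_restrict measurableSet_Icc, inter_self]
  have hWr : μW.restrict unitSquare
      = Measure.map (fun t : ℝ => (t, 1 - t)) (volume.restrict (Icc (0:ℝ) 1)) := by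
    rw [hμW, Measure.restrict_map hgW hS, hpreW,
      Measure.restrict_restrict measurableSet_Icc, inter_self]
  -- integrabilities
  have hIsq : Integrable (fun p : ℝ × ℝ => f p.1 p.2) (volume.restrict unitSquare) :=
    hf.continuousOn.integrableOn_compact hcomp
  have hIM : Integrable (fun p : ℝ × ℝ => f p.1 p.2)
      (Measure.map (fun t : ℝ => (t, t)) (volume.restrict (Icc (0:ℝ) 1))) := by
    rw [integrable_map_measure hf.aestronglyMeasurable hgM.aemeasurable]
    exact ((hf.comp (continuous_id.prodMk continuous_id)).continuousOn).integrableOn_compact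
      isCompact_Icc
  have hIW : Integrable (fun p : ℝ × ℝ => f p.1 p.2)
      (Measure.map (fun t : ℝ => (t, 1 - t)) (volume.restrict (Icc (0:ℝ) 1))) := by
    rw [integrable_map_measure hf.aestronglyMeasurable hgW.aemeasurable]
    exact ((hf.comp (continuous_id.prodMk
      (continuous_const.sub continuous_id))).continuousOn).integrableOn_compact isCompact_Icc
  have h2ne : (1/2 : ENNReal) ≠ ⊤ := by simp
  -- decompose restricted measure
  have hres : νq.restrict unitSquare = ENNReal.ofReal (1 - q) • volume.restrict unitSquare
      + ENNReal.ofReal q • ((1/2 : ENNReal)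
          • Measure.map (fun t : ℝ => (t, t)) (volume.restrict (Icc (0:ℝ) 1))
        + (1/2 : ENNReal)
          • Measure.map (fun t : ℝ => (t, 1 - t)) (volume.restrict (Icc (0:ℝ) 1))) := by
    rw [hνq]
    simp only [Measure.restrict_add, Measure.restrict_smul]
    rw [Measure.restrict_restrict hS, inter_self, hMr, hWr]
  have hint1 : Integrable (fun p : ℝ × ℝ => f p.1 p.2)
      (ENNReal.ofReal (1 - q) • volume.restrict unitSquare) :=
    hIsq.smul_measure ENNReal.ofReal_ne_top
  have hint2 : Integrable (fun p : ℝ × ℝ => f p.1 p.2)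
      (ENNReal.ofReal q • ((1/2 : ENNReal)
          • Measure.map (fun t : ℝ => (t, t)) (volume.restrict (Icc (0:ℝ) 1))
        + (1/2 : ENNReal)
          • Measure.map (fun t : ℝ => (t, 1 - t)) (volume.restrict (Icc (0:ℝ) 1)))) :=
    (((hIM.smul_measure h2ne).add_measure (hIW.smul_measure h2ne)).smul_measure
      ENNReal.ofReal_ne_top)
  have hmapM : (∫ p, f p.1 p.2
        ∂(Measure.map (fun t : ℝ => (t, t)) (volume.restrict (Icc (0:ℝ) 1))))
      = ∫ t in Icc (0:ℝ) 1, f t t :=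
    integral_map hgM.aemeasurable hf.aestronglyMeasurable
  have hmapW : (∫ p, f p.1 p.2
        ∂(Measure.map (fun t : ℝ => (t, 1 - t)) (volume.restrict (Icc (0:ℝ) 1))))
      = ∫ t in Icc (0:ℝ) 1, f t (1 - t) :=
    integral_map hgW.aemeasurable hf.aestronglyMeasurable
  rw [biForm]
  rw [show (∫ p in unitSquare, f p.1 p.2 ∂νq) = ∫ p, f p.1 p.2 ∂(νq.restrict unitSquare) from rfl]
  rw [hres, integral_add_measure hint1 hint2, integral_smul_measure, integral_smul_measure,
    integral_add_measure (hIM.smul_measure h2ne) (hIW.smul_measure h2ne),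
    integral_smul_measure, integral_smul_measure, hmapM, hmapW]
  rw [ENNReal.toReal_ofReal (by linarith [hq.2] : (0:ℝ) ≤ 1 - q),
    ENNReal.toReal_ofReal hq.1]
  norm_num

theorem stmt10 (q : ℝ) (hq : q ∈ Icc (0:ℝ) 1) (C : ℝ → ℝ → ℝ) (hC : IsCopula C)
    (μM μW νq : MeasureTheory.Measure (ℝ × ℝ))
    (hμM : μM = MeasureTheory.Measure.map (fun t : ℝ => (t, t))
      (MeasureTheory.volume.restrict (Icc (0:ℝ) 1)))
    (hμW : μW = MeasureTheory.Measure.map (fun t : ℝ => (t, 1 - t))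
      (MeasureTheory.volume.restrict (Icc (0:ℝ) 1)))
    (hνq : νq = ENNReal.ofReal (1 - q) • MeasureTheory.volume.restrict unitSquare
      + ENNReal.ofReal q • ((1/2 : ENNReal) • μM + (1/2 : ENNReal) • μW)) :
    (biForm νq C - 1/4) / (biForm νq (fun u v => min u v) - 1/4)
      = (2 * (1 - q) / (2 + q)) * (12 * (∫ p in unitSquare, C p.1 p.2) - 3)
      + (3 * q / (2 + q)) * (8 * ((1/2) * (∫ t in Icc (0:ℝ) 1, C t t)
          + (1/2) * (∫ t in Icc (0:ℝ) 1, C t (1 - t))) - 2) := by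
  have h01 : ∀ t : ℝ, t ∈ Icc (0:ℝ) 1 → 1 - t ∈ Icc (0:ℝ) 1 := by
    intro t ht; exact ⟨by linarith [ht.2], by linarith [ht.1]⟩
  have hS : MeasurableSet unitSquare := by
    rw [unitSquare]; exact measurableSet_Icc.prod measurableSet_Icc
  have hCc := Cc_cont hC
  have hEq : EqOn (fun p : ℝ × ℝ => C p.1 p.2) (fun p : ℝ × ℝ => Cc C p.1 p.2) unitSquare := by
    rintro ⟨u, v⟩ hp
    rw [unitSquare, mem_prod] at hp
    exact (Cc_eq hp.1 hp.2).symm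
  have hb1 : biForm νq C = biForm νq (Cc C) := by
    rw [biForm, biForm]; exact setIntegral_congr_fun hS hEq
  have hb2 : (∫ p in unitSquare, C p.1 p.2) = ∫ p in unitSquare, Cc C p.1 p.2 :=
    setIntegral_congr_fun hS hEq
  have hd : (∫ t in Icc (0:ℝ) 1, C t t) = ∫ t in Icc (0:ℝ) 1, Cc C t t :=
    setIntegral_congr_fun measurableSet_Icc (fun t ht => (Cc_eq ht ht).symm)
  have ha : (∫ t in Icc (0:ℝ) 1, C t (1 - t)) = ∫ t in Icc (0:ℝ) 1, Cc C t (1 - t) :=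
    setIntegral_congr_fun measurableSet_Icc (fun t ht => (Cc_eq ht (h01 t ht)).symm)
  have hkeyC := key_decomp q hq μM μW νq hμM hμW hνq (Cc C) hCc
  have hkeyM : biForm νq (fun u v => min u v)
      = (1 - q) * (1/3) + q * (1/2 * (1/2) + 1/2 * (1/4)) := by
    rw [key_decomp q hq μM μW νq hμM hμW hνq (fun u v => min u v)
      (continuous_fst.min continuous_snd)]
    rw [intMinSq, intMinDiag, intMinAnti]
  rw [hb1, hb2, hd, ha, hkeyC, hkeyM]
  have h2q : (2:ℝ) + q ≠ 0 := by linarith [hq.1]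
  have hden : (1 - q) * (1/3) + q * (1/2 * (1/2) + 1/2 * (1/4)) - 1/4 = (2 + q)/24 := by ring
  rw [hden]
  have hden' : ((2:ℝ) + q)/24 ≠ 0 := by positivity
  field_simp
  ring
end
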